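/- Let R be a unital associative superalgebra over a commutative ring k with 2 invertible. The k-linear map sending u_{ij}(a) ↦ e_{ij}(a⊗1) and w_{ij}(a) ↦ e_{ij}(a⊗ν) is an isomorphism of Lie superalgebras q_n(R) ≅ gl_n(R⊗Q1). -/

import Mathlib

variable {k : Type} [CommRing k] [Invertible (2 : k)]
variable {R : Type} [Ring R] [Algebra k R]

/-- The multiplication of the graded tensor product `R ⊗ Q1`, in the model where
`(a, b)` represents `a ⊗ 1 + b ⊗ ν` (with `ν` odd, `ν² = 1`, Koszul signs via the
grading involution `σ` of `R`). -/
def mulQ (σ : R ≃ₐ[k] R) (p q : R × R) : R × R :=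
  (p.1 * q.1 + p.2 * σ q.2, p.1 * q.2 + p.2 * σ q.1)

/-- The grading involution of `R ⊗ Q1` in the model above. -/
def tauQ (σ : R ≃ₐ[k] R) (p : R × R) : R × R := (σ p.1, -σ p.2)

/-- The grading involution of `R ⊗ Q1` as a `k`-linear map. -/
def tauL (σ : R ≃ₐ[k] R) : (R × R) →ₗ[k] (R × R) :=
  LinearMap.prod (σ.toLinearMap ∘ₗ LinearMap.fst k R R)
    (-(σ.toLinearMap ∘ₗ LinearMap.snd k R R))

/-- The queer Lie superalgebra `q_n(A)` coordinatized by a superalgebra `A` with grading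
involution `s`: block matrices `[[A,B],[ρ(B),ρ(A)]]` inside `gl_{n|n}(A)`, where `ρ = s`
entrywise (so `ρ(a) = (-1)^{|a|} a` on homogeneous elements). -/
def qSub (n : ℕ) (A : Type) [AddCommGroup A] [Module k A] (s : A →ₗ[k] A) :
    Submodule k (Matrix (Fin n ⊕ Fin n) (Fin n ⊕ Fin n) A) where
  carrier := {M | (∀ i j, M (Sum.inr i) (Sum.inr j) = s (M (Sum.inl i) (Sum.inl j))) ∧
                  (∀ i j, M (Sum.inr i) (Sum.inl j) = s (M (Sum.inl i) (Sum.inr j)))}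
  add_mem' := by
    intro M N hM hN
    exact ⟨fun i j => by simp [Matrix.add_apply, hM.1 i j, hN.1 i j],
           fun i j => by simp [Matrix.add_apply, hM.2 i j, hN.2 i j]⟩
  zero_mem' := ⟨fun i j => by simp, fun i j => by simp⟩
  smul_mem' := by
    intro c M hM
    exact ⟨fun i j => by simp [Matrix.smul_apply, hM.1 i j],
           fun i j => by simp [Matrix.smul_apply, hM.2 i j]⟩

/-- The grading involution of `gl_{n|n}(A)`: the parity of `e_{ij}(a)` is `|i| + |j| + |a|`,
so the involution applies `s` entrywise with a sign `-1` on the off-diagonal blocks. -/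
def gInvMat {n : ℕ} {A : Type} [Neg A] (s : A → A)
    (M : Matrix (Fin n ⊕ Fin n) (Fin n ⊕ Fin n) A) :
    Matrix (Fin n ⊕ Fin n) (Fin n ⊕ Fin n) A :=
  Matrix.of fun i j => if i.isLeft = j.isLeft then s (M i j) else -(s (M i j))

/-- The set of graded commutators `[x,y] = xy - (-1)^{|x||y|} yx` of homogeneous elements of
a submodule `V` of `gl_{n|n}(A)` (homogeneity w.r.t. the grading involution `gInvMat s`). -/
def gBrSet (n : ℕ) {A : Type} [Ring A] [Module k A]
    (s : A → A) (V : Submodule k (Matrix (Fin n ⊕ Fin n) (Fin n ⊕ Fin n) A)) :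
    Set (Matrix (Fin n ⊕ Fin n) (Fin n ⊕ Fin n) A) :=
  {z | ∃ x ∈ V, ∃ y ∈ V, ∃ px py : ZMod 2,
    gInvMat s x = ((-1 : ℤ) ^ px.val) • x ∧ gInvMat s y = ((-1 : ℤ) ^ py.val) • y ∧
    z = x * y - ((-1 : ℤ) ^ (px * py).val) • (y * x)}

/-- The derived sub-superalgebra `[V, V]`: the span of graded commutators of homogeneous
elements of `V`. -/
def derivedSub (n : ℕ) {A : Type} [Ring A] [Module k A]
    (s : A → A) (V : Submodule k (Matrix (Fin n ⊕ Fin n) (Fin n ⊕ Fin n) A)) :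
    Submodule k (Matrix (Fin n ⊕ Fin n) (Fin n ⊕ Fin n) A) :=
  Submodule.span k (gBrSet n s V)

/-- Matrix multiplication over the superalgebra `R ⊗ Q1` (modelled on `R × R` with
multiplication `mulQ σ`). -/
def mmulQ (σ : R ≃ₐ[k] R) {m : Type} [Fintype m] (M N : Matrix m m (R × R)) :
    Matrix m m (R × R) :=
  Matrix.of fun i j => ∑ l, mulQ σ (M i l) (N l j)

/-- The grading involution of `gl_n(R ⊗ Q1)`: entrywise application of the involution of
`R ⊗ Q1` (the parity of `e_{ij}(s)` is `|s|`). -/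
def tauMat (σ : R ≃ₐ[k] R) {m : Type} (M : Matrix m m (R × R)) : Matrix m m (R × R) :=
  Matrix.of fun i j => tauQ σ (M i j)

open Matrix in
/-- The `k`-linear map `u_{ij}(a) ↦ e_{ij}(a ⊗ 1)`, `w_{ij}(a) ↦ e_{ij}(a ⊗ ν)`
is an isomorphism of Lie superalgebras `q_n(R) ≅ gl_n(R ⊗ Q1)`.  Concretely: there is a
`k`-linear equivalence `Φ` from `q_n(R)` (the block matrices `[[A,B],[ρB,ρA]]`) onto
`n × n`-matrices over `R ⊗ Q1 ≃ R × R`, given entrywise by `(Φ M) i j = (A i j, B i j)`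
(which sends `u_{ij}(a)` to `e_{ij}(a⊗1)` and `w_{ij}(a)` to `e_{ij}(a⊗ν)`), preserving the
grading and the graded commutators of homogeneous elements. -/
theorem q_iso_gl_RQ1 (σ : R ≃ₐ[k] R) (hσ : ∀ a, σ (σ a) = a) (n : ℕ) :
    ∃ Φ : ↥(qSub n R σ.toLinearMap) ≃ₗ[k] Matrix (Fin n) (Fin n) (R × R),
      (∀ (M : ↥(qSub n R σ.toLinearMap)) (i j : Fin n),
        Φ M i j = ((M : Matrix (Fin n ⊕ Fin n) (Fin n ⊕ Fin n) R) (Sum.inl i) (Sum.inl j),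
                   (M : Matrix (Fin n ⊕ Fin n) (Fin n ⊕ Fin n) R) (Sum.inl i) (Sum.inr j))) ∧
      (∀ (M : ↥(qSub n R σ.toLinearMap)) (pM : ZMod 2),
        gInvMat ⇑σ (M : Matrix (Fin n ⊕ Fin n) (Fin n ⊕ Fin n) R) = ((-1 : ℤ) ^ pM.val) • (M : Matrix (Fin n ⊕ Fin n) (Fin n ⊕ Fin n) R) →
        tauMat σ (Φ M) = ((-1 : ℤ) ^ pM.val) • Φ M) ∧
      (∀ (M N P : ↥(qSub n R σ.toLinearMap)) (pM pN : ZMod 2),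
        gInvMat ⇑σ (M : Matrix (Fin n ⊕ Fin n) (Fin n ⊕ Fin n) R) = ((-1 : ℤ) ^ pM.val) • (M : Matrix (Fin n ⊕ Fin n) (Fin n ⊕ Fin n) R) →
        gInvMat ⇑σ (N : Matrix (Fin n ⊕ Fin n) (Fin n ⊕ Fin n) R) = ((-1 : ℤ) ^ pN.val) • (N : Matrix (Fin n ⊕ Fin n) (Fin n ⊕ Fin n) R) →
        (P : Matrix (Fin n ⊕ Fin n) (Fin n ⊕ Fin n) R)
            = (M : Matrix (Fin n ⊕ Fin n) (Fin n ⊕ Fin n) R) * (N : Matrix (Fin n ⊕ Fin n) (Fin n ⊕ Fin n) R)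
            - ((-1 : ℤ) ^ (pM * pN).val) •
                ((N : Matrix (Fin n ⊕ Fin n) (Fin n ⊕ Fin n) R) * (M : Matrix (Fin n ⊕ Fin n) (Fin n ⊕ Fin n) R)) →
        Φ P = mmulQ σ (Φ M) (Φ N)
            - ((-1 : ℤ) ^ (pM * pN).val) • mmulQ σ (Φ N) (Φ M)) := by
  classical
  set s := σ.toLinearMap with hs
  refine ⟨LinearEquiv.mk
    { toFun := fun M => Matrix.of fun i j =>
        ((M : Matrix (Fin n ⊕ Fin n) (Fin n ⊕ Fin n) R) (Sum.inl i) (Sum.inl j),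
         (M : Matrix (Fin n ⊕ Fin n) (Fin n ⊕ Fin n) R) (Sum.inl i) (Sum.inr j))
      map_add' := fun M N => by
        funext i j
        simp [Matrix.add_apply, Prod.ext_iff]
      map_smul' := fun c M => by
        funext i j
        simp [Matrix.smul_apply, Prod.ext_iff] }
    (fun N => ⟨Matrix.of fun i j =>
        match i, j with
        | Sum.inl i, Sum.inl j => (N i j).1
        | Sum.inl i, Sum.inr j => (N i j).2
        | Sum.inr i, Sum.inl j => σ ((N i j).2)
        | Sum.inr i, Sum.inr j => σ ((N i j).1),
      ⟨fun i j => by simp [hs], fun i j => by simp [hs]⟩⟩)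
    (fun M => by
      ext i j
      obtain ⟨h1, h2⟩ := M.2
      rcases i with i | i <;> rcases j with j | j <;>
        simp [Matrix.of_apply, h1 i j, h2 i j, hs])
    (fun N => by
      funext i j
      simp), ?_, ?_, ?_⟩
  · intro M i j; rfl
  · intro M pM h
    funext i j
    have h1 := congrFun (congrFun h (Sum.inl i)) (Sum.inl j)
    have h2 := congrFun (congrFun h (Sum.inl i)) (Sum.inr j)
    simp only [gInvMat, Matrix.of_apply, Matrix.smul_apply, Sum.isLeft_inl, Sum.isLeft_inr,
      if_true, reduceIte] at h1 h2
    funext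
    simp only [tauMat, tauQ, Matrix.of_apply, Matrix.smul_apply, Prod.smul_mk, LinearEquiv.coe_mk,
      LinearMap.coe_mk, AddHom.coe_mk, Prod.ext_iff, Prod.smul_fst, Prod.smul_snd]
    constructor
    · exact h1
    · simp only [Bool.true_eq_false, if_false, reduceIte] at h2; exact h2
  · intro M N P pM pN hM hN hP
    funext i j
    have hMm := M.2
    have hNm := N.2
    have e1 : ∀ (X Y : Matrix (Fin n ⊕ Fin n) (Fin n ⊕ Fin n) R),
        (∀ a b, X (Sum.inr a) (Sum.inr b) = σ (X (Sum.inl a) (Sum.inl b))) →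
        (∀ a b, X (Sum.inr a) (Sum.inl b) = σ (X (Sum.inl a) (Sum.inr b))) →
        (∀ a b, Y (Sum.inr a) (Sum.inr b) = σ (Y (Sum.inl a) (Sum.inl b))) →
        (∀ a b, Y (Sum.inr a) (Sum.inl b) = σ (Y (Sum.inl a) (Sum.inr b))) →
        ((X * Y) (Sum.inl i) (Sum.inl j)
          = ∑ l : Fin n, (X (Sum.inl i) (Sum.inl l) * Y (Sum.inl l) (Sum.inl j)
              + X (Sum.inl i) (Sum.inr l) * σ (Y (Sum.inl l) (Sum.inr j))))
        ∧ ((X * Y) (Sum.inl i) (Sum.inr j)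
          = ∑ l : Fin n, (X (Sum.inl i) (Sum.inl l) * Y (Sum.inl l) (Sum.inr j)
              + X (Sum.inl i) (Sum.inr l) * σ (Y (Sum.inl l) (Sum.inl j)))) := by
      intro X Y hX1 hX2 hY1 hY2
      constructor
      · rw [Matrix.mul_apply, Fintype.sum_sum_type, ← Finset.sum_add_distrib]
        refine Finset.sum_congr rfl fun l _ => ?_
        rw [hY2]
      · rw [Matrix.mul_apply, Fintype.sum_sum_type, ← Finset.sum_add_distrib]
        refine Finset.sum_congr rfl fun l _ => ?_
        rw [hY1]
    have hMN := e1 _ _ (fun a b => by simpa [hs] using hMm.1 a b)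
      (fun a b => by simpa [hs] using hMm.2 a b)
      (fun a b => by simpa [hs] using hNm.1 a b)
      (fun a b => by simpa [hs] using hNm.2 a b)
    have hNM := e1 _ _ (fun a b => by simpa [hs] using hNm.1 a b)
      (fun a b => by simpa [hs] using hNm.2 a b)
      (fun a b => by simpa [hs] using hMm.1 a b)
      (fun a b => by simpa [hs] using hMm.2 a b)
    have hP1 := congrFun (congrFun hP (Sum.inl i)) (Sum.inl j)
    have hP2 := congrFun (congrFun hP (Sum.inl i)) (Sum.inr j)
    simp only [Matrix.sub_apply, Matrix.smul_apply] at hP1 hP2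
    rw [hMN.1, hNM.1] at hP1
    rw [hMN.2, hNM.2] at hP2
    show (_, _) = _
    simp only [mmulQ, mulQ, Matrix.sub_apply, Matrix.smul_apply, Matrix.of_apply,
      Prod.ext_iff, Prod.smul_fst, Prod.smul_snd, Prod.fst_sub, Prod.snd_sub,
      Prod.fst_sum, Prod.snd_sum, LinearEquiv.coe_mk, LinearMap.coe_mk, AddHom.coe_mk]
    exact ⟨hP1, hP2⟩
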